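/- Assume α ∈ (0,1). Let β : (0,1) → [0,∞) be any function with β(ε) ≤ |ln ε| and lim_{ε→0} |ln ε|^{α/(1−α)}·e^{−β(ε)} = 0, set a(ε) = ( (1−α)/γ⋆ · (|ln ε| − β(ε)) )^{1/(1−α)}, and let b̃(ε) = C |ln ε|^{1/(1−α)} where C is any constant with C > ((1−α)/γ⋆)^{1/(1−α)}. Then the first passage time of the Wang–Landau process from state 1 to state 2 satisfies lim_{ε→0} P( a(ε) < T⁰₁→₂ < b̃(ε) ) = 1. -/

import Mathlib

open MeasureTheory ProbabilityTheory Filter Real Set Topology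

noncomputable section

/-- The state space: index `0` is state "1", index `1` is state "2", index `2` is state "3". -/
abbrev WLState := Fin 3

/-- First passage time of the trajectory `ω` to the state `s`
(with the convention `sInf ∅ = 0`). -/
def hitTime (s : WLState) (ω : ℕ → WLState) : ℕ := sInf {n : ℕ | ω n = s}

/-- A measure `μ` on trajectory space is the law of the (possibly path-dependent) Markov chain
with initial state `x0` and transition matrix `P x k` at time `k` given the past path `x`,
expressed through its cylinder probabilities. -/
def IsChainLaw (P : (ℕ → WLState) → ℕ → WLState → WLState → ℝ) (x0 : WLState)
    (μ : Measure (ℕ → WLState)) : Prop :=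
  ∀ (n : ℕ) (x : ℕ → WLState),
    μ {ω : ℕ → WLState | ∀ k ≤ n, ω k = x k} =
      (if x 0 = x0 then (1 : ENNReal) else 0) *
        ∏ k ∈ Finset.range n, ENNReal.ofReal (P x k (x k) (x (k + 1)))

/-- The unnormalized Wang-Landau weight `θ̃ₙ(i)` along the path `x`, with step sizes
`γₖ = γs k^(-α)`: it satisfies `θ̃₀ = (1,1,1)` and `θ̃ₙ₊₁(i) = θ̃ₙ(i)(1 + γₙ₊₁ 1_{xₙ₊₁ = i})`. -/
def wtilde (γs α : ℝ) (x : ℕ → WLState) (n : ℕ) (i : WLState) : ℝ :=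
  ∏ k ∈ Finset.Icc 1 n, (1 + if x k = i then γs * (k : ℝ) ^ (-α) else 0)

/-- The normalized Wang-Landau weight `θₙ(i)` along the path `x`. -/
def thetaNorm (γs α : ℝ) (x : ℕ → WLState) (n : ℕ) (i : WLState) : ℝ :=
  wtilde γs α x n i / ∑ j, wtilde γs α x n j

/-- The Metropolis transition matrix `P_θ` biased by the weight vector `θ`. -/
def PWL (ε : ℝ) (θ : WLState → ℝ) : WLState → WLState → ℝ :=
  ![![1 - 1 / 3 * min (ε * θ 0 / θ 1) 1, 1 / 3 * min (ε * θ 0 / θ 1) 1, 0],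
    ![1 / 3 * min (θ 1 / (ε * θ 0)) 1,
      1 - 1 / 3 * min (θ 1 / (ε * θ 0)) 1 - 1 / 3 * min (θ 1 / (ε * θ 2)) 1,
      1 / 3 * min (θ 1 / (ε * θ 2)) 1],
    ![0, 1 / 3 * min (ε * θ 2 / θ 1) 1, 1 - 1 / 3 * min (ε * θ 2 / θ 1) 1]]

/-- `μ` is the law of the Wang-Landau process with parameters `ε`, `γs`, `α`,
started at state "1" (index 0). -/
def IsWLLaw (ε γs α : ℝ) (μ : Measure (ℕ → WLState)) : Prop :=
  IsChainLaw (fun x k => PWL ε (thetaNorm γs α x k)) 0 μ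

namespace Stmt8Aux

/-- `Π_k = ∏_{j=1}^k (1 + γ j^{-α})`. -/
def Pi0 (γs α : ℝ) (k : ℕ) : ℝ := ∏ j ∈ Finset.Icc 1 k, (1 + γs * (j : ℝ) ^ (-α))

/-- `q_k = (1/3) min(ε Π_k, 1)`. -/
def qq (ε γs α : ℝ) (k : ℕ) : ℝ := 1 / 3 * min (ε * Pi0 γs α k) 1

variable {γs α ε : ℝ}

lemma factor_ge_one (hγs : 0 < γs) {j : ℕ} (hj : 1 ≤ j) :
    (1 : ℝ) ≤ 1 + γs * (j : ℝ) ^ (-α) := by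
  have : (0:ℝ) < (j : ℝ) ^ (-α) :=
    Real.rpow_pos_of_pos (by exact_mod_cast hj : (0:ℝ) < j) _
  nlinarith

lemma one_le_prod_real {s : Finset ℕ} {f : ℕ → ℝ} (h : ∀ i ∈ s, (1:ℝ) ≤ f i) :
    (1:ℝ) ≤ ∏ i ∈ s, f i := by
  calc (1:ℝ) = ∏ _i ∈ s, (1:ℝ) := by simp
  _ ≤ ∏ i ∈ s, f i :=
    Finset.prod_le_prod (fun i _ => zero_le_one) h

lemma one_le_Pi0 (hγs : 0 < γs) (k : ℕ) : (1:ℝ) ≤ Pi0 γs α k := by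
  unfold Pi0
  exact one_le_prod_real fun j hj => factor_ge_one hγs (Finset.mem_Icc.mp hj).1

lemma Pi0_pos (hγs : 0 < γs) (k : ℕ) : (0:ℝ) < Pi0 γs α k :=
  lt_of_lt_of_le one_pos (one_le_Pi0 hγs k)

lemma Pi0_split (γs α : ℝ) {m n : ℕ} (hmn : m ≤ n) :
    Pi0 γs α n = Pi0 γs α m * ∏ j ∈ Finset.Ioc m n, (1 + γs * (j : ℝ) ^ (-α)) := by
  unfold Pi0
  simp only [show ∀ b : ℕ, Finset.Icc 1 b = Finset.Ioc 0 b from fun b => Finset.Icc_add_one_left_eq_Ioc 0 b] at *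
  exact (Finset.prod_Ioc_consecutive _ (Nat.zero_le m) hmn).symm

lemma Pi0_mono (hγs : 0 < γs) : Monotone (Pi0 γs α) := by
  intro m n hmn
  rw [Pi0_split γs α hmn]
  have h1 : (1:ℝ) ≤ ∏ j ∈ Finset.Ioc m n, (1 + γs * (j : ℝ) ^ (-α)) :=
    one_le_prod_real fun j hj => factor_ge_one hγs (by have := (Finset.mem_Ioc.mp hj).1; omega)
  nlinarith [Pi0_pos (α := α) hγs m]

lemma qq_nonneg (hε : 0 ≤ ε) (hγs : 0 < γs) (k : ℕ) : 0 ≤ qq ε γs α k := by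
  have := Pi0_pos (α := α) hγs k
  have : 0 ≤ min (ε * Pi0 γs α k) 1 := le_min (by positivity) zero_le_one
  unfold qq; linarith

lemma qq_le_third (k : ℕ) : qq ε γs α k ≤ 1/3 := by
  unfold qq
  have : min (ε * Pi0 γs α k) 1 ≤ 1 := min_le_right _ _
  linarith

lemma wtilde_zero_path (γs α : ℝ) (n : ℕ) :
    wtilde γs α (fun _ => (0 : WLState)) n 0 = Pi0 γs α n := by
  unfold wtilde Pi0
  exact Finset.prod_congr rfl (fun k _ => by simp)

lemma wtilde_zero_path_ne (γs α : ℝ) (n : ℕ) {i : WLState} (hi : i ≠ 0) :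
    wtilde γs α (fun _ => (0 : WLState)) n i = 1 := by
  unfold wtilde
  refine Finset.prod_eq_one (fun k _ => ?_)
  simp [Ne.symm hi]

lemma PWL_zero_zero_eval (hε : ε ∈ Set.Ioo (0:ℝ) 1) (hγs : 0 < γs) (k : ℕ) :
    PWL ε (thetaNorm γs α (fun _ => (0 : WLState)) k) 0 0 = 1 - qq ε γs α k := by
  have hP := Pi0_pos (α := α) hγs k
  have hsum : ∑ j : WLState, wtilde γs α (fun _ => (0 : WLState)) k j
      = Pi0 γs α k + 2 := by
    rw [Fin.sum_univ_three]
    rw [wtilde_zero_path, wtilde_zero_path_ne _ _ _ (by decide),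
      wtilde_zero_path_ne _ _ _ (by decide)]
    ring
  have hS : (0:ℝ) < Pi0 γs α k + 2 := by linarith
  have h0 : thetaNorm γs α (fun _ => (0 : WLState)) k 0
      = Pi0 γs α k / (Pi0 γs α k + 2) := by
    unfold thetaNorm; rw [hsum, wtilde_zero_path]
  have h1 : thetaNorm γs α (fun _ => (0 : WLState)) k 1
      = 1 / (Pi0 γs α k + 2) := by
    unfold thetaNorm; rw [hsum, wtilde_zero_path_ne _ _ _ (by decide)]
  have harg : ε * thetaNorm γs α (fun _ => (0 : WLState)) k 0 /
      thetaNorm γs α (fun _ => (0 : WLState)) k 1 = ε * Pi0 γs α k := by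
    rw [h0, h1]; field_simp
  show (1 - 1 / 3 * min (ε * thetaNorm γs α (fun _ => (0 : WLState)) k 0 /
      thetaNorm γs α (fun _ => (0 : WLState)) k 1) 1 : ℝ) = _
  rw [harg]; rfl

lemma PWL_zero_two (ε : ℝ) (θ : WLState → ℝ) : PWL ε θ 0 2 = 0 := rfl

end Stmt8Aux

namespace Stmt8Aux

variable {γs α ε : ℝ}

/-- Extend a vector on `Fin (n+1)` to `ℕ` by `0`. -/
def ext (n : ℕ) (v : Fin (n + 1) → WLState) : ℕ → WLState :=
  fun k => if h : k < n + 1 then v ⟨k, h⟩ else 0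

lemma ext_eq (n : ℕ) (v : Fin (n + 1) → WLState) {k : ℕ} (hk : k ≤ n) :
    ext n v k = v ⟨k, Nat.lt_succ_of_le hk⟩ := dif_pos (Nat.lt_succ_of_le hk)

lemma cyl_measurable (n : ℕ) (x : ℕ → WLState) :
    MeasurableSet {ω : ℕ → WLState | ∀ k ≤ n, ω k = x k} := by
  have h : {ω : ℕ → WLState | ∀ k ≤ n, ω k = x k}
      = ⋂ k ∈ Set.Iic n, (fun ω : ℕ → WLState => ω k) ⁻¹' {x k} := by
    ext ω; simp [Set.mem_iInter]
  rw [h]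
  exact MeasurableSet.biInter (Set.to_countable _)
    (fun k _ => (measurable_pi_apply k) (measurableSet_singleton _))

lemma measure_nohit (hε : ε ∈ Set.Ioo (0:ℝ) 1) (hγs : 0 < γs)
    {μ : Measure (ℕ → WLState)} (h : IsWLLaw ε γs α μ) (n : ℕ) :
    μ {ω : ℕ → WLState | ∀ k ≤ n, ω k ≠ 1} =
      ∏ k ∈ Finset.range n, ENNReal.ofReal (1 - qq ε γs α k) := by
  classical
  set T : Finset (Fin (n + 1) → WLState) :=
    Finset.univ.filter (fun v => ∀ i, v i ≠ 1) with hT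
  have hdecomp : {ω : ℕ → WLState | ∀ k ≤ n, ω k ≠ 1}
      = ⋃ v ∈ T, {ω : ℕ → WLState | ∀ k ≤ n, ω k = ext n v k} := by
    ext ω
    simp only [Set.mem_setOf_eq, Set.mem_iUnion]
    constructor
    · intro hω
      refine ⟨fun i => ω i, ?_, ?_⟩
      · simp only [hT, Finset.mem_filter, Finset.mem_univ, true_and]
        intro i; exact hω i (Nat.lt_succ_iff.mp i.isLt)
      · intro k hk; rw [ext_eq n _ hk]
    · rintro ⟨v, hv, hωv⟩
      intro k hk
      rw [hωv k hk, ext_eq n v hk]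
      simp only [hT, Finset.mem_filter, Finset.mem_univ, true_and] at hv
      exact hv _
  rw [hdecomp]
  have hdisj : (T : Set (Fin (n + 1) → WLState)).PairwiseDisjoint
      (fun v => {ω : ℕ → WLState | ∀ k ≤ n, ω k = ext n v k}) := by
    intro v _ w _ hvw
    refine Set.disjoint_left.mpr ?_
    intro ω hv hw
    apply hvw
    funext i
    have h1 := hv i.1 (Nat.lt_succ_iff.mp i.isLt)
    have h2 := hw i.1 (Nat.lt_succ_iff.mp i.isLt)
    rw [ext_eq n v (Nat.lt_succ_iff.mp i.isLt)] at h1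
    rw [ext_eq n w (Nat.lt_succ_iff.mp i.isLt)] at h2
    rw [← h1, h2]
  rw [measure_biUnion_finset hdisj (fun v _ => cyl_measurable n (ext n v))]
  have hv0 : (fun _ => (0 : WLState)) ∈ T := by
    simp only [hT, Finset.mem_filter, Finset.mem_univ, true_and]
    intro i; decide
  rw [Finset.sum_eq_single_of_mem (fun _ => (0 : WLState)) hv0 ?zero]
  case zero =>
    intro v hvT hvne
    rw [h n (ext n v)]
    by_cases h0 : ext n v 0 = 0
    · -- find the first nonzero coordinate
      have hex : ∃ k, ext n v k ≠ 0 := by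
        by_contra hc
        push_neg at hc
        apply hvne
        funext i
        have := hc i.1
        rwa [ext_eq n v (Nat.lt_succ_iff.mp i.isLt)] at this
      set m := Nat.find hex with hm
      have hmspec : ext n v m ≠ 0 := Nat.find_spec hex
      have hm1 : 1 ≤ m := by
        rcases Nat.eq_zero_or_pos m with h' | h'
        · exact absurd (h' ▸ hmspec) (by simp [h0])
        · exact h'
      have hmn : m ≤ n := by
        by_contra hc
        push_neg at hc
        exact hmspec (dif_neg (by omega))
      have hprev : ext n v (m - 1) = 0 := by
        by_contra hc
        have hle : m ≤ m - 1 := Nat.find_le hc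
        omega
      have hne1 : ext n v m ≠ 1 := by
        rw [ext_eq n v hmn]
        simp only [hT, Finset.mem_filter, Finset.mem_univ, true_and] at hvT
        exact hvT _
      have h2 : ext n v m = 2 := by
        have h3 := (ext n v m).isLt
        have h4 : (ext n v m).1 ≠ 0 := fun hc => hmspec (Fin.ext hc)
        have h5 : (ext n v m).1 ≠ 1 := fun hc => hne1 (Fin.ext hc)
        exact Fin.ext (by omega)
      have hmem : m - 1 ∈ Finset.range n := Finset.mem_range.mpr (by omega)
      rw [Finset.prod_eq_zero hmem ?_, mul_zero]
      have hstep : m - 1 + 1 = m := by omega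
      show ENNReal.ofReal
        (PWL ε (thetaNorm γs α (ext n v) (m-1)) (ext n v (m-1)) (ext n v (m-1+1))) = 0
      rw [hstep, hprev, h2, PWL_zero_two, ENNReal.ofReal_zero]
    · rw [if_neg h0, zero_mul]
  · have hext0 : ext n (fun _ => (0 : WLState)) = fun _ => (0 : WLState) := by
      funext k; unfold ext; split <;> rfl
    rw [h n _, hext0, if_pos rfl, one_mul]
    refine Finset.prod_congr rfl (fun k _ => ?_)
    show ENNReal.ofReal (PWL ε (thetaNorm γs α (fun _ => (0:WLState)) k) 0 0) = _
    rw [PWL_zero_zero_eval hε hγs k]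

end Stmt8Aux

namespace Stmt8Aux

variable {γs α ε : ℝ}

/-- Bernoulli-type: `(x+1)^p ≤ x^p + 1` for `x ≥ 0`, `p ∈ [0,1]`. -/
lemma rpow_add_one_le {x p : ℝ} (hx : 0 ≤ x) (hp : 0 ≤ p) (hp1 : p ≤ 1) :
    (x + 1) ^ p ≤ x ^ p + 1 := by
  have h := NNReal.rpow_add_le_add_rpow (x.toNNReal) 1 hp hp1
  rw [NNReal.one_rpow] at h
  have h2 := NNReal.coe_le_coe.mpr h
  rw [NNReal.coe_rpow, NNReal.coe_add, NNReal.coe_add, NNReal.coe_rpow, NNReal.coe_one,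
    Real.coe_toNNReal x hx] at h2
  exact h2

/-- Key concavity step: for `1 ≤ x`, `(1-α)·x^(-α) ≤ x^(1-α) - (x-1)^(1-α)`. -/
lemma concave_step (hα : 0 < α) (hα1 : α < 1) {x : ℝ} (hx : 1 ≤ x) :
    (1 - α) * x ^ (-α) ≤ x ^ (1 - α) - (x - 1) ^ (1 - α) := by
  have hx0 : (0:ℝ) < x := lt_of_lt_of_le zero_lt_one hx
  have hinv : 1 / x ≤ 1 := by rw [div_le_one hx0]; exact hx
  have hinv0 : 0 ≤ 1 / x := by positivity
  have hs : -1 ≤ -(1/x) := by linarith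
  have hs0 : 0 ≤ 1 + -(1/x) := by linarith
  have hb : x - 1 = x * (1 + -(1/x)) := by
    field_simp
    ring
  have hmul : (x * (1 + -(1/x))) ^ (1-α) = x ^ (1-α) * (1 + -(1/x)) ^ (1-α) :=
    Real.mul_rpow hx0.le hs0
  have hbern : (1 + -(1/x)) ^ (1-α) ≤ 1 + (1-α) * -(1/x) :=
    rpow_one_add_le_one_add_mul_self hs (by linarith) (by linarith)
  have hxpow : x ^ (1-α) * (1/x) = x ^ (-α) := by
    rw [one_div, ← Real.rpow_neg_one x, ← Real.rpow_add hx0]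
    congr 1; ring
  have hnn : 0 ≤ x ^ (1-α) := Real.rpow_nonneg hx0.le _
  have hfinal : (x - 1) ^ (1 - α) ≤ x ^ (1-α) - (1-α) * x ^ (-α) := by
    calc (x - 1) ^ (1 - α) = x ^ (1-α) * (1 + -(1/x)) ^ (1-α) := by rw [hb, hmul]
      _ ≤ x ^ (1-α) * (1 + (1-α) * -(1/x)) := mul_le_mul_of_nonneg_left hbern hnn
      _ = x ^ (1-α) - (1-α) * (x ^ (1-α) * (1/x)) := by ring
      _ = x ^ (1-α) - (1-α) * x ^ (-α) := by rw [hxpow]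
  linarith

end Stmt8Aux

namespace Stmt8Aux

variable {γs α ε : ℝ}

/-- Upper bound `(1-α)·∑_{j=1}^N j^{-α} ≤ N^{1-α}`. -/
lemma sum_rpow_le (hα : 0 < α) (hα1 : α < 1) (N : ℕ) :
    (1 - α) * ∑ j ∈ Finset.Icc 1 N, (j : ℝ) ^ (-α) ≤ (N : ℝ) ^ (1 - α) := by
  induction N with
  | zero => simp [Real.zero_rpow (by linarith : (1:ℝ) - α ≠ 0)]
  | succ N ih =>
    rw [Finset.sum_Icc_succ_top (by omega : 1 ≤ N + 1)]
    have hx : (1:ℝ) ≤ (N + 1 : ℕ) := by exact_mod_cast Nat.succ_le_succ (Nat.zero_le N)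
    have hstep := concave_step hα hα1 hx
    have hcast : ((N + 1 : ℕ) : ℝ) - 1 = (N : ℝ) := by push_cast; ring
    rw [hcast] at hstep
    nlinarith

/-- Bernoulli other direction: `(x+1)^{1-α} - x^{1-α} ≤ (1-α) x^{-α}` for `x ≥ 1`. -/
lemma concave_step2 (hα : 0 < α) (hα1 : α < 1) {x : ℝ} (hx : 1 ≤ x) :
    (x + 1) ^ (1 - α) - x ^ (1 - α) ≤ (1 - α) * x ^ (-α) := by
  have hx0 : (0:ℝ) < x := lt_of_lt_of_le zero_lt_one hx
  have hs0 : 0 ≤ 1 + 1/x := by positivity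
  have hb : x + 1 = x * (1 + 1/x) := by field_simp
  have hmul : (x * (1 + 1/x)) ^ (1-α) = x ^ (1-α) * (1 + 1/x) ^ (1-α) :=
    Real.mul_rpow hx0.le hs0
  have hbern : (1 + 1/x) ^ (1-α) ≤ 1 + (1-α) * (1/x) :=
    rpow_one_add_le_one_add_mul_self (le_trans (by norm_num : (-1:ℝ) ≤ 0) (by positivity)) (by linarith) (by linarith)
  have hxpow : x ^ (1-α) * (1/x) = x ^ (-α) := by
    rw [one_div, ← Real.rpow_neg_one x, ← Real.rpow_add hx0]
    congr 1; ring
  have hnn : 0 ≤ x ^ (1-α) := Real.rpow_nonneg hx0.le _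
  have h : (x + 1) ^ (1 - α) ≤ x ^ (1-α) + (1-α) * x ^ (-α) := by
    calc (x + 1) ^ (1 - α) = x ^ (1-α) * (1 + 1/x) ^ (1-α) := by rw [hb, hmul]
      _ ≤ x ^ (1-α) * (1 + (1-α) * (1/x)) := mul_le_mul_of_nonneg_left hbern hnn
      _ = x ^ (1-α) + (1-α) * (x ^ (1-α) * (1/x)) := by ring
      _ = x ^ (1-α) + (1-α) * x ^ (-α) := by rw [hxpow]
  linarith

/-- Lower bound `(N+1)^{1-α} - J^{1-α} ≤ (1-α)·∑_{j=J}^N j^{-α}` for `1 ≤ J`. -/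
lemma sum_rpow_ge' (hα : 0 < α) (hα1 : α < 1) {J : ℕ} (hJ : 1 ≤ J) (N : ℕ) :
    ((N : ℝ) + 1) ^ (1 - α) - (J : ℝ) ^ (1 - α) ≤
      (1 - α) * ∑ j ∈ Finset.Icc J N, (j : ℝ) ^ (-α) := by
  have h1α : (0:ℝ) < 1 - α := by linarith
  induction N with
  | zero =>
    rw [Finset.Icc_eq_empty_of_lt (by omega : 0 < J), Finset.sum_empty]
    have h1 : ((0:ℕ):ℝ) + 1 = 1 := by norm_num
    have h2 : (1:ℝ) ≤ (J:ℝ) ^ (1-α) :=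
      Real.one_le_rpow (by exact_mod_cast hJ) h1α.le
    rw [h1, Real.one_rpow]
    linarith
  | succ N ih =>
    by_cases hJN : J ≤ N + 1
    · rw [Finset.sum_Icc_succ_top hJN]
      have hx : (1:ℝ) ≤ (N : ℝ) + 1 := by
        have := Nat.cast_nonneg (α := ℝ) N; linarith
      have hstep := concave_step2 hα hα1 hx
      push_cast at *
      nlinarith
    · push_neg at hJN
      rw [Finset.Icc_eq_empty_of_lt hJN, Finset.sum_empty]
      have h2 : ((N:ℝ) + 1 + 1) ^ (1-α) ≤ (J:ℝ) ^ (1-α) := by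
        apply Real.rpow_le_rpow (by positivity) _ h1α.le
        have h3 : (N + 2 : ℕ) ≤ J := by omega
        have h4 : ((N + 2 : ℕ) : ℝ) ≤ (J:ℝ) := by exact_mod_cast h3
        push_cast at h4
        linarith
      push_cast
      linarith

lemma sum_rpow_ge (hα : 0 < α) (hα1 : α < 1) {J : ℕ} (hJ : 1 ≤ J) (N : ℕ) :
    (N : ℝ) ^ (1 - α) - (J : ℝ) ^ (1 - α) ≤
      (1 - α) * ∑ j ∈ Finset.Icc J N, (j : ℝ) ^ (-α) := by
  have h1α : (0:ℝ) < 1 - α := by linarith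
  have hmono : (N:ℝ) ^ (1-α) ≤ ((N:ℝ) + 1) ^ (1-α) :=
    Real.rpow_le_rpow (Nat.cast_nonneg N) (by linarith) h1α.le
  linarith [sum_rpow_ge' hα hα1 hJ N]

end Stmt8Aux

namespace Stmt8Aux

variable {γs α ε : ℝ}

lemma Pi0_le_exp (hγs : 0 < γs) (hα : 0 < α) (hα1 : α < 1) (N : ℕ) :
    Pi0 γs α N ≤ Real.exp (γs * (N:ℝ) ^ (1-α) / (1-α)) := by
  have h1α : (0:ℝ) < 1 - α := by linarith
  have h1 : Pi0 γs α N ≤ Real.exp (∑ j ∈ Finset.Icc 1 N, γs * (j:ℝ) ^ (-α)) := by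
    rw [Real.exp_sum]
    unfold Pi0
    apply Finset.prod_le_prod
    · intro j hj
      have := factor_ge_one (α := α) hγs (Finset.mem_Icc.mp hj).1; linarith
    · intro j _
      have := Real.add_one_le_exp (γs * (j:ℝ)^(-α)); linarith
  refine h1.trans (Real.exp_le_exp.mpr ?_)
  rw [← Finset.mul_sum, mul_div_assoc]
  apply mul_le_mul_of_nonneg_left _ hγs.le
  rw [le_div_iff₀ h1α]
  have hs := sum_rpow_le hα hα1 N
  linarith

lemma sum_Pi0_le (hγs : 0 < γs) (hα : 0 < α) {N : ℕ} (hN : 1 ≤ N) :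
    ∑ k ∈ Finset.range N, Pi0 γs α k ≤ Pi0 γs α N * (N:ℝ)^α / γs := by
  have hNpos : (0:ℝ) < N := by exact_mod_cast hN
  set c : ℝ := γs * (N:ℝ)^(-α) with hc
  have hcpos : 0 < c := by positivity
  set r : ℝ := 1 + c with hr
  have hr1 : 1 < r := by simp only [hr]; linarith
  have hrpos : 0 < r := by linarith
  set s : ℝ := 1/r with hs
  have hspos : 0 < s := by positivity
  have hslt : s < 1 := by rw [hs, div_lt_one hrpos]; linarith
  -- pointwise bound
  have hpt : ∀ k ∈ Finset.range N, Pi0 γs α k ≤ Pi0 γs α N * s^(N - k) := by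
    intro k hk
    have hkN : k ≤ N := (Finset.mem_range.mp hk).le
    have hsplit := Pi0_split γs α hkN
    have hprodge : r ^ (N - k) ≤ ∏ j ∈ Finset.Ioc k N, (1 + γs * (j:ℝ)^(-α)) := by
      calc r ^ (N - k) = ∏ _j ∈ Finset.Ioc k N, r := by
            rw [Finset.prod_const, Nat.card_Ioc]
        _ ≤ _ := by
            apply Finset.prod_le_prod (fun j _ => hrpos.le)
            intro j hj
            rcases Finset.mem_Ioc.mp hj with ⟨hj1, hj2⟩
            have hjpos : (0:ℝ) < j := by exact_mod_cast Nat.lt_of_le_of_lt (Nat.zero_le k) hj1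
            have : (N:ℝ)^(-α) ≤ (j:ℝ)^(-α) :=
              Real.rpow_le_rpow_of_nonpos hjpos (by exact_mod_cast hj2) (by linarith)
            have := mul_le_mul_of_nonneg_left this hγs.le
            simp only [hr, hc]
            linarith
    have hP := Pi0_pos (α := α) hγs k
    have hrpow : (0:ℝ) < r ^ (N - k) := pow_pos hrpos _
    rw [hs, one_div, inv_pow, ← div_eq_mul_inv, le_div_iff₀ hrpow]
    calc Pi0 γs α k * r ^ (N-k) ≤ Pi0 γs α k * ∏ j ∈ Finset.Ioc k N, (1 + γs * (j:ℝ)^(-α)) :=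
          mul_le_mul_of_nonneg_left hprodge hP.le
      _ = Pi0 γs α N := hsplit.symm
  -- geometric sum
  have hgeom : ∑ k ∈ Finset.range N, s^(N - k) ≤ 1/(r - 1) := by
    have hrefl := Finset.sum_range_reflect (fun k => s^(N - k)) N
    have hcongr : ∑ j ∈ Finset.range N, s^(N - (N - 1 - j)) = ∑ j ∈ Finset.range N, s^(j+1) := by
      apply Finset.sum_congr rfl
      intro j hj
      have := Finset.mem_range.mp hj
      congr 1
      omega
    have heq : ∑ k ∈ Finset.range N, s^(N - k) = s * ∑ j ∈ Finset.range N, s^j := by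
      rw [← hrefl, hcongr, Finset.mul_sum]
      exact Finset.sum_congr rfl (fun j _ => by ring)
    rw [heq]
    have hsN : 0 ≤ s^N := pow_nonneg hspos.le N
    have h1 : ∑ j ∈ Finset.range N, s^j ≤ 1/(1 - s) := by
      rw [le_div_iff₀ (by linarith : (0:ℝ) < 1 - s)]
      nlinarith [geom_sum_mul s N]
    have h2 : s * ∑ j ∈ Finset.range N, s^j ≤ s/(1-s) := by
      rw [div_eq_mul_one_div]
      exact mul_le_mul_of_nonneg_left h1 hspos.le
    refine h2.trans (le_of_eq ?_)
    rw [hs]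
    field_simp
  have hPN : 0 < Pi0 γs α N := Pi0_pos (α := α) hγs N
  calc ∑ k ∈ Finset.range N, Pi0 γs α k ≤ ∑ k ∈ Finset.range N, Pi0 γs α N * s^(N-k) :=
        Finset.sum_le_sum hpt
    _ = Pi0 γs α N * ∑ k ∈ Finset.range N, s^(N-k) := by rw [Finset.mul_sum]
    _ ≤ Pi0 γs α N * (1/(r-1)) := mul_le_mul_of_nonneg_left hgeom hPN.le
    _ = Pi0 γs α N * (N:ℝ)^α / γs := by
        have : r - 1 = γs * (N:ℝ)^(-α) := by simp [hr, hc]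
        rw [this, Real.rpow_neg hNpos.le]
        have hNα : (0:ℝ) < (N:ℝ)^α := Real.rpow_pos_of_pos hNpos α
        field_simp

lemma one_sub_sum_le_prod (s : Finset ℕ) (f : ℕ → ℝ) (h0 : ∀ i ∈ s, 0 ≤ f i)
    (h1 : ∀ i ∈ s, f i ≤ 1) :
    1 - ∑ i ∈ s, f i ≤ ∏ i ∈ s, (1 - f i) := by
  induction s using Finset.cons_induction with
  | empty => simp
  | cons a s ha ih =>
    rw [Finset.prod_cons, Finset.sum_cons]
    have hs0 : 0 ≤ ∑ i ∈ s, f i :=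
      Finset.sum_nonneg (fun i hi => h0 i (Finset.mem_cons_of_mem hi))
    have hp := ih (fun i hi => h0 i (Finset.mem_cons_of_mem hi))
      (fun i hi => h1 i (Finset.mem_cons_of_mem hi))
    have hfa0 := h0 a (Finset.mem_cons_self a s)
    have hfa1 := h1 a (Finset.mem_cons_self a s)
    nlinarith [mul_le_mul_of_nonneg_left hp (by linarith : (0:ℝ) ≤ 1 - f a),
      mul_nonneg hfa0 hs0]

lemma prod_one_sub_qq_le (hε : ε ∈ Set.Ioo (0:ℝ) 1) (hγs : 0 < γs) {k₀ n : ℕ} (hk : k₀ ≤ n)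
    (hone : ∀ k, k₀ ≤ k → 1 ≤ ε * Pi0 γs α k) :
    ∏ k ∈ Finset.range n, (1 - qq ε γs α k) ≤ (2/3 : ℝ)^(n - k₀) := by
  rw [Finset.range_eq_Ico, ← Finset.prod_Ico_consecutive _ (Nat.zero_le k₀) hk]
  have h2 : ∏ k ∈ Finset.Ico k₀ n, (1 - qq ε γs α k) = (2/3:ℝ)^(n - k₀) := by
    rw [Finset.prod_congr rfl (fun k hk' => ?_), Finset.prod_const, Nat.card_Ico]
    show (1 - qq ε γs α k) = 2/3
    unfold qq
    rw [min_eq_right (hone k (Finset.mem_Ico.mp hk').1)]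
    norm_num
  have h1 : ∏ k ∈ Finset.Ico 0 k₀, (1 - qq ε γs α k) ≤ 1 := by
    apply Finset.prod_le_one
    · intro k _
      have := qq_le_third (ε := ε) (γs := γs) (α := α) k
      linarith
    · intro k _
      have := qq_nonneg (α := α) hε.1.le hγs k
      linarith
  rw [h2]
  have hpow : (0:ℝ) ≤ (2/3:ℝ)^(n - k₀) := by positivity
  nlinarith [Finset.prod_nonneg (fun k (_ : k ∈ Finset.Ico 0 k₀) => by
    have := qq_le_third (ε := ε) (γs := γs) (α := α) k; linarith : ∀ k ∈ Finset.Ico 0 k₀, (0:ℝ) ≤ 1 - qq ε γs α k)]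

end Stmt8Aux

namespace Stmt8Aux

variable {γs α ε : ℝ}

lemma g1_bound (hγs : 0 < γs) (hα : 0 < α) (hα1 : α < 1) (hε : ε ∈ Set.Ioo (0:ℝ) 1)
    {b : ℝ} (hb0 : 0 ≤ b) (hbL : b ≤ |Real.log ε|) :
    ∑ k ∈ Finset.range (⌈((1-α)/γs * (|Real.log ε| - b)) ^ (1/(1-α))⌉₊), qq ε γs α k ≤
      1/(3*γs) * Real.exp (γs/(1-α)) * Real.exp (-b) *
        (((1-α)/γs) ^ (α/(1-α)) * |Real.log ε| ^ (α/(1-α)) + 1) := by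
  have h1α : (0:ℝ) < 1 - α := by linarith
  set L := |Real.log ε| with hL
  have hL0 : 0 ≤ L := abs_nonneg _
  set x := (1-α)/γs * (L - b) with hx
  have hx0 : 0 ≤ x := mul_nonneg (by positivity) (by linarith)
  set aa := x ^ (1/(1-α)) with haa
  have haa0 : 0 ≤ aa := Real.rpow_nonneg hx0 _
  set N := ⌈aa⌉₊ with hN
  have hRHS0 : 0 ≤ 1/(3*γs) * Real.exp (γs/(1-α)) * Real.exp (-b) *
      (((1-α)/γs) ^ (α/(1-α)) * L ^ (α/(1-α)) + 1) := by positivity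
  rcases Nat.eq_zero_or_pos N with hN0 | hN1
  · rw [hN0]; simpa using hRHS0
  have hNaa : (N:ℝ) ≤ aa + 1 := (Nat.ceil_lt_add_one haa0).le
  have hεpos := hε.1
  have s1 : ∑ k ∈ Finset.range N, qq ε γs α k ≤ ε/3 * ∑ k ∈ Finset.range N, Pi0 γs α k := by
    rw [Finset.mul_sum]
    apply Finset.sum_le_sum
    intro k _
    unfold qq
    have hm := min_le_left (ε * Pi0 γs α k) 1
    nlinarith [Pi0_pos (α := α) hγs k]
  have s2 := sum_Pi0_le (α := α) hγs hα hN1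
  have s3 := Pi0_le_exp hγs hα hα1 N
  have e1 : (N:ℝ) ^ (1-α) ≤ x + 1 := by
    have h1 : (N:ℝ) ^ (1-α) ≤ (aa+1) ^ (1-α) :=
      Real.rpow_le_rpow (Nat.cast_nonneg N) hNaa h1α.le
    have h2 : (aa+1) ^ (1-α) ≤ aa^(1-α) + 1 := rpow_add_one_le haa0 h1α.le (by linarith)
    have h3 : aa ^ (1-α) = x := by
      rw [haa, ← Real.rpow_mul hx0]
      rw [one_div, inv_mul_cancel₀ (ne_of_gt h1α), Real.rpow_one]
    linarith
  have e2 : γs * (N:ℝ)^(1-α) / (1-α) ≤ (L - b) + γs/(1-α) := by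
    rw [div_le_iff₀ h1α]
    have hmul := mul_le_mul_of_nonneg_left e1 hγs.le
    have hxx : γs * x = (1-α) * (L - b) := by
      rw [hx]; field_simp
    have hdiv : γs/(1-α)*(1-α) = γs := div_mul_cancel₀ _ (ne_of_gt h1α)
    nlinarith [hmul, hxx, hdiv]
  have s4 : Pi0 γs α N ≤ Real.exp (L - b) * Real.exp (γs/(1-α)) := by
    rw [← Real.exp_add]
    exact s3.trans (Real.exp_le_exp.mpr (by linarith))
  have hεL : ε * Real.exp L = 1 := by
    rw [hL, abs_of_neg (Real.log_neg hεpos hε.2), Real.exp_neg, Real.exp_log hεpos]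
    exact mul_inv_cancel₀ (ne_of_gt hεpos)
  have hεE2 : ε * Real.exp (L - b) = Real.exp (-b) := by
    rw [show L - b = L + (-b) by ring, Real.exp_add, ← mul_assoc, hεL, one_mul]
  have e3 : (N:ℝ) ^ α ≤ ((1-α)/γs) ^ (α/(1-α)) * L ^ (α/(1-α)) + 1 := by
    have h1 : (N:ℝ) ^ α ≤ (aa+1) ^ α :=
      Real.rpow_le_rpow (Nat.cast_nonneg N) hNaa hα.le
    have h2 : (aa+1) ^ α ≤ aa ^ α + 1 := rpow_add_one_le haa0 hα.le hα1.le
    have h3 : aa ^ α = x ^ (α/(1-α)) := by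
      rw [haa, ← Real.rpow_mul hx0]
      congr 1
      field_simp
    have h4 : x ^ (α/(1-α)) ≤ ((1-α)/γs * L) ^ (α/(1-α)) := by
      apply Real.rpow_le_rpow hx0 _ (by positivity)
      rw [hx]
      apply mul_le_mul_of_nonneg_left (by linarith) (by positivity)
    have h5 : ((1-α)/γs * L) ^ (α/(1-α)) = ((1-α)/γs) ^ (α/(1-α)) * L ^ (α/(1-α)) :=
      Real.mul_rpow (by positivity) hL0
    linarith
  have hNα0 : (0:ℝ) ≤ (N:ℝ) ^ α := Real.rpow_nonneg (Nat.cast_nonneg N) α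
  calc ∑ k ∈ Finset.range N, qq ε γs α k
      ≤ ε/3 * ∑ k ∈ Finset.range N, Pi0 γs α k := s1
    _ ≤ ε/3 * (Pi0 γs α N * (N:ℝ)^α / γs) := mul_le_mul_of_nonneg_left s2 (by positivity)
    _ = 1/(3*γs) * (ε * Pi0 γs α N) * (N:ℝ)^α := by ring
    _ ≤ 1/(3*γs) * (ε * (Real.exp (L - b) * Real.exp (γs/(1-α)))) * (N:ℝ)^α := by
        apply mul_le_mul_of_nonneg_right _ hNα0
        apply mul_le_mul_of_nonneg_left _ (by positivity)
        exact mul_le_mul_of_nonneg_left s4 hεpos.le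
    _ = 1/(3*γs) * Real.exp (γs/(1-α)) * Real.exp (-b) * (N:ℝ)^α := by
        rw [← mul_assoc ε, hεE2]; ring
    _ ≤ 1/(3*γs) * Real.exp (γs/(1-α)) * Real.exp (-b) *
        (((1-α)/γs) ^ (α/(1-α)) * L ^ (α/(1-α)) + 1) := by
        apply mul_le_mul_of_nonneg_left e3 (by positivity)

lemma log_Pi0_ge (hγs : 0 < γs) (hα : 0 < α) (hα1 : α < 1) {δ : ℝ} (hδ : 0 < δ)
    {J : ℕ} (hJ1 : 1 ≤ J) (hJδ : γs * (J:ℝ)^(-α) ≤ δ) {k : ℕ} (hk : J ≤ k) :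
    γs / ((1+δ)*(1-α)) * ((k:ℝ)^(1-α) - (J:ℝ)^(1-α)) ≤ Real.log (Pi0 γs α k) := by
  have h1α : (0:ℝ) < 1 - α := by linarith
  have hJpos : (0:ℝ) < J := by exact_mod_cast hJ1
  have hlogsum : Real.log (Pi0 γs α k) =
      ∑ j ∈ Finset.Icc 1 k, Real.log (1 + γs * (j:ℝ)^(-α)) := by
    unfold Pi0
    apply Real.log_prod
    intro j hj
    have := factor_ge_one (α := α) hγs (Finset.mem_Icc.mp hj).1
    linarith
  have hsub : Finset.Icc J k ⊆ Finset.Icc 1 k :=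
    Finset.Icc_subset_Icc_left hJ1
  have hdrop : ∑ j ∈ Finset.Icc J k, Real.log (1 + γs * (j:ℝ)^(-α)) ≤
      Real.log (Pi0 γs α k) := by
    rw [hlogsum]
    apply Finset.sum_le_sum_of_subset_of_nonneg hsub
    intro j hj _
    apply Real.log_nonneg (factor_ge_one hγs (Finset.mem_Icc.mp hj).1)
  have hterm : ∀ j ∈ Finset.Icc J k,
      γs/(1+δ) * (j:ℝ)^(-α) ≤ Real.log (1 + γs * (j:ℝ)^(-α)) := by
    intro j hj
    rcases Finset.mem_Icc.mp hj with ⟨hj1, _⟩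
    set c := γs * (j:ℝ)^(-α) with hcdef
    have hjpos : (0:ℝ) < j := by
      have : 1 ≤ j := le_trans hJ1 hj1
      exact_mod_cast this
    have hc0 : 0 < c := by positivity
    have hcδ : c ≤ δ := by
      refine le_trans ?_ hJδ
      apply mul_le_mul_of_nonneg_left _ hγs.le
      exact Real.rpow_le_rpow_of_nonpos hJpos (by exact_mod_cast hj1) (by linarith)
    have hlog : c/(1+c) ≤ Real.log (1 + c) := by
      have := Real.one_sub_inv_le_log_of_pos (by linarith : (0:ℝ) < 1 + c)
      have hinv : 1 - (1+c)⁻¹ = c/(1+c) := by field_simp; ring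
      linarith [hinv ▸ this]
    have hmono : c/(1+δ) ≤ c/(1+c) := by
      apply div_le_div_of_nonneg_left hc0.le (by linarith) (by linarith)
    calc γs/(1+δ) * (j:ℝ)^(-α) = c/(1+δ) := by rw [hcdef]; ring
      _ ≤ c/(1+c) := hmono
      _ ≤ Real.log (1 + c) := hlog
  have hsum2 : γs/(1+δ) * ∑ j ∈ Finset.Icc J k, (j:ℝ)^(-α) ≤
      ∑ j ∈ Finset.Icc J k, Real.log (1 + γs * (j:ℝ)^(-α)) := by
    rw [Finset.mul_sum]
    exact Finset.sum_le_sum hterm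
  have hS := sum_rpow_ge hα hα1 hJ1 k
  have hfinal : γs / ((1+δ)*(1-α)) * ((k:ℝ)^(1-α) - (J:ℝ)^(1-α)) ≤
      γs/(1+δ) * ∑ j ∈ Finset.Icc J k, (j:ℝ)^(-α) := by
    have h2 := mul_le_mul_of_nonneg_left hS
      (by positivity : (0:ℝ) ≤ γs/((1+δ)*(1-α)))
    have h3 : γs/((1+δ)*(1-α)) * ((1-α) * ∑ j ∈ Finset.Icc J k, (j:ℝ)^(-α)) =
        γs/(1+δ) * ∑ j ∈ Finset.Icc J k, (j:ℝ)^(-α) := by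
      field_simp
    linarith
  linarith [hfinal, hsum2, hdrop]

lemma one_le_eps_Pi0 (hγs : 0 < γs) (hα : 0 < α) (hα1 : α < 1)
    (hε : ε ∈ Set.Ioo (0:ℝ) 1) {δ : ℝ} (hδ : 0 < δ)
    {J : ℕ} (hJ1 : 1 ≤ J) (hJδ : γs * (J:ℝ)^(-α) ≤ δ) {k : ℕ} (hk : J ≤ k)
    (hkL : (1+δ)*(1-α)/γs * |Real.log ε| + (J:ℝ)^(1-α) ≤ (k:ℝ)^(1-α)) :
    1 ≤ ε * Pi0 γs α k := by
  have h1α : (0:ℝ) < 1 - α := by linarith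
  set L := |Real.log ε| with hL
  have hlog := log_Pi0_ge hγs hα hα1 hδ hJ1 hJδ hk
  have hLlog : L ≤ Real.log (Pi0 γs α k) := by
    have hcoeff : (0:ℝ) < γs / ((1+δ)*(1-α)) := by positivity
    have h1 : (1+δ)*(1-α)/γs * L ≤ (k:ℝ)^(1-α) - (J:ℝ)^(1-α) := by linarith
    have h2 := mul_le_mul_of_nonneg_left h1 hcoeff.le
    have h3 : γs / ((1+δ)*(1-α)) * ((1+δ)*(1-α)/γs * L) = L := by
      field_simp
    linarith [h3 ▸ h2]
  have hP := Pi0_pos (α := α) hγs k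
  have : Real.exp L ≤ Pi0 γs α k := by
    rw [← Real.exp_log hP]
    exact Real.exp_le_exp.mpr hLlog
  have hεL : ε * Real.exp L = 1 := by
    rw [hL, abs_of_neg (Real.log_neg hε.1 hε.2), Real.exp_neg, Real.exp_log hε.1]
    exact mul_inv_cancel₀ (ne_of_gt hε.1)
  calc (1:ℝ) = ε * Real.exp L := hεL.symm
    _ ≤ ε * Pi0 γs α k := mul_le_mul_of_nonneg_left this hε.1.le

end Stmt8Aux


open Stmt8Aux

/-- For `α ∈ (0,1)`, with `a(ε) = ((1−α)/γ⋆·(|ln ε| − β(ε)))^{1/(1−α)}`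
and `b̃(ε) = C |ln ε|^{1/(1−α)}`, the first passage time to state 2 satisfies
`lim_{ε→0} P(a(ε) < T⁰₁→₂ < b̃(ε)) = 1`. -/
theorem stmt8 (γs α : ℝ) (hγs : 0 < γs) (hα : 0 < α) (hα1 : α < 1)
    (μ : ℝ → Measure (ℕ → WLState))
    (hprob : ∀ ε ∈ Set.Ioo (0 : ℝ) 1, IsProbabilityMeasure (μ ε))
    (hμ : ∀ ε ∈ Set.Ioo (0 : ℝ) 1, IsWLLaw ε γs α (μ ε))
    (β : ℝ → ℝ) (hβ : ∀ ε ∈ Set.Ioo (0 : ℝ) 1, 0 ≤ β ε ∧ β ε ≤ |Real.log ε|)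
    (hβlim : Tendsto (fun ε : ℝ => |Real.log ε| ^ (α / (1 - α)) * Real.exp (-β ε))
      (𝓝[Set.Ioo (0 : ℝ) 1] 0) (𝓝 0))
    (C : ℝ) (hC : ((1 - α) / γs) ^ (1 / (1 - α)) < C) :
    Tendsto
      (fun ε : ℝ =>
        (μ ε {ω : ℕ → WLState |
          ((1 - α) / γs * (|Real.log ε| - β ε)) ^ (1 / (1 - α)) < (hitTime 1 ω : ℝ) ∧
            (hitTime 1 ω : ℝ) < C * |Real.log ε| ^ (1 / (1 - α))}).toReal)
      (𝓝[Set.Ioo (0 : ℝ) 1] 0) (𝓝 1) := by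
  classical
  have h1α : (0:ℝ) < 1 - α := by linarith
  have hp : (0:ℝ) < 1/(1-α) := by positivity
  set F := 𝓝[Set.Ioo (0:ℝ) 1] (0:ℝ) with hF
  have hmemF : ∀ᶠ ε in F, ε ∈ Set.Ioo (0:ℝ) 1 := eventually_mem_nhdsWithin
  -- |log ε| → ∞
  have hLtends : Tendsto (fun ε : ℝ => |Real.log ε|) F atTop := by
    have h1 : Tendsto Real.log F atBot :=
      Real.tendsto_log_nhdsGT_zero.mono_left
        (nhdsWithin_mono 0 (fun x hx => hx.1))
    have h2 : Tendsto (fun ε : ℝ => -Real.log ε) F atTop :=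
      tendsto_neg_atBot_atTop.comp h1
    apply h2.congr'
    filter_upwards [hmemF] with ε hε
    rw [abs_of_neg (Real.log_neg hε.1 hε.2)]
  have hC0 : 0 < C :=
    lt_trans (Real.rpow_pos_of_pos (by positivity) _) hC
  -- abbreviations
  set L : ℝ → ℝ := fun ε => |Real.log ε| with hLdef
  set aa : ℝ → ℝ := fun ε => ((1-α)/γs * (L ε - β ε)) ^ (1/(1-α)) with haadef
  set bb : ℝ → ℝ := fun ε => C * L ε ^ (1/(1-α)) with hbbdef
  set NN : ℝ → ℕ := fun ε => ⌈aa ε⌉₊ with hNNdef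
  set MM : ℝ → ℕ := fun ε => ⌈bb ε⌉₊ - 1 with hMMdef
  set g1 : ℝ → ℝ := fun ε => ∑ k ∈ Finset.range (NN ε), qq ε γs α k with hg1def
  set g2 : ℝ → ℝ := fun ε => ∏ k ∈ Finset.range (MM ε), (1 - qq ε γs α k) with hg2def
  set f : ℝ → ℝ := fun ε =>
    (μ ε {ω : ℕ → WLState |
      ((1 - α) / γs * (|Real.log ε| - β ε)) ^ (1 / (1 - α)) < (hitTime 1 ω : ℝ) ∧
        (hitTime 1 ω : ℝ) < C * |Real.log ε| ^ (1 / (1 - α))}).toReal with hfdef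
  -- pointwise sandwich
  have hsand : ∀ ε ∈ Set.Ioo (0:ℝ) 1, 1 - g1 ε - g2 ε ≤ f ε ∧ f ε ≤ 1 := by
    intro ε hε
    haveI := hprob ε hε
    have hLpos : 0 < L ε := abs_pos.mpr (ne_of_lt (Real.log_neg hε.1 hε.2))
    have hq0 : ∀ k, 0 ≤ qq ε γs α k := fun k => qq_nonneg (α := α) hε.1.le hγs k
    have hq1 : ∀ k, qq ε γs α k ≤ 1 := fun k =>
      le_trans (qq_le_third (ε := ε) (γs := γs) (α := α) k) (by norm_num)
    set E : Set (ℕ → WLState) := {ω : ℕ → WLState |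
      ((1 - α) / γs * (|Real.log ε| - β ε)) ^ (1 / (1 - α)) < (hitTime 1 ω : ℝ) ∧
        (hitTime 1 ω : ℝ) < C * |Real.log ε| ^ (1 / (1 - α))} with hEdef
    set A : Set (ℕ → WLState) := {ω | ∀ k ≤ NN ε, ω k ≠ 1} with hAdef
    set B : Set (ℕ → WLState) := {ω | ∀ k ≤ MM ε, ω k ≠ 1} with hBdef
    have hA := measure_nohit hε hγs (hμ ε hε) (NN ε)
    have hB := measure_nohit hε hγs (hμ ε hε) (MM ε)
    -- cast of MM
    have hbbpos : 0 < bb ε := by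
      have : 0 < L ε ^ (1/(1-α)) := Real.rpow_pos_of_pos hLpos _
      exact mul_pos hC0 this
    have hceil1 : 1 ≤ ⌈bb ε⌉₊ := Nat.one_le_ceil_iff.mpr hbbpos
    have hMMcast : (MM ε : ℝ) = (⌈bb ε⌉₊ : ℝ) - 1 := by
      rw [hMMdef]
      push_cast [hceil1]
      ring
    have hMMlt : (MM ε : ℝ) < bb ε := by
      have := Nat.ceil_lt_add_one hbbpos.le
      rw [hMMcast]; linarith
    -- inclusion A ⊆ E ∪ B
    have hincl : A ⊆ E ∪ B := by
      intro ω hω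
      by_cases hωB : ω ∈ B
      · exact Or.inr hωB
      · left
        rw [hBdef] at hωB
        simp only [Set.mem_setOf_eq, not_forall] at hωB
        obtain ⟨m, hm, hω1⟩ := hωB
        push_neg at hω1
        have hne : {n : ℕ | ω n = 1}.Nonempty := ⟨m, hω1⟩
        have hTmem : ω (hitTime 1 ω) = 1 := Nat.sInf_mem hne
        have hTle : hitTime 1 ω ≤ m := Nat.sInf_le hω1
        have hTgt : NN ε < hitTime 1 ω := by
          by_contra hcon
          push_neg at hcon
          exact hω (hitTime 1 ω) hcon hTmem
        constructor
        · calc aa ε ≤ (NN ε : ℝ) := Nat.le_ceil _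
            _ < (hitTime 1 ω : ℝ) := by exact_mod_cast hTgt
        · have h5 : (hitTime 1 ω : ℝ) ≤ (MM ε : ℝ) := by
            exact_mod_cast le_trans hTle hm
          exact lt_of_le_of_lt h5 hMMlt
    -- measures
    have hle : μ ε A ≤ μ ε E + μ ε B :=
      le_trans (measure_mono hincl) (measure_union_le E B)
    have hAtoReal : (μ ε A).toReal = ∏ k ∈ Finset.range (NN ε), (1 - qq ε γs α k) := by
      rw [hA, ENNReal.toReal_prod]
      exact Finset.prod_congr rfl
        (fun k _ => ENNReal.toReal_ofReal (by linarith [hq1 k]))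
    have hBtoReal : (μ ε B).toReal = g2 ε := by
      rw [hB, ENNReal.toReal_prod]
      exact Finset.prod_congr rfl
        (fun k _ => ENNReal.toReal_ofReal (by linarith [hq1 k]))
    have hfin : μ ε E ≠ ⊤ := measure_ne_top _ _
    have hfinB : μ ε B ≠ ⊤ := measure_ne_top _ _
    have hto : (μ ε A).toReal ≤ (μ ε E).toReal + (μ ε B).toReal := by
      have h2 := ENNReal.toReal_mono (ENNReal.add_ne_top.mpr ⟨hfin, hfinB⟩) hle
      rwa [ENNReal.toReal_add hfin hfinB] at h2
    have hW : 1 - g1 ε ≤ (μ ε A).toReal := by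
      rw [hAtoReal]
      exact one_sub_sum_le_prod _ _ (fun k _ => hq0 k) (fun k _ => hq1 k)
    constructor
    · rw [hfdef]
      have : f ε = (μ ε E).toReal := rfl
      rw [hBtoReal] at hto
      linarith
    · rw [hfdef]
      have h1 : μ ε E ≤ 1 := prob_le_one
      calc (μ ε E).toReal ≤ (1 : ENNReal).toReal := ENNReal.toReal_mono (by norm_num) h1
        _ = 1 := by norm_num
  -- g1 → 0
  have hg1tends : Tendsto g1 F (𝓝 0) := by
    set K : ℝ := 1/(3*γs) * Real.exp (γs/(1-α)) with hK
    set c1 : ℝ := ((1-α)/γs) ^ (α/(1-α)) with hc1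
    have hexp0 : Tendsto (fun ε => Real.exp (-β ε)) F (𝓝 0) := by
      apply squeeze_zero' (f := fun ε => Real.exp (-β ε))
        (g := fun ε => L ε ^ (α/(1-α)) * Real.exp (-β ε))
      · exact Filter.Eventually.of_forall (fun ε => (Real.exp_pos _).le)
      · filter_upwards [hLtends.eventually_ge_atTop 1] with ε hL1
        have h1 : (1:ℝ) ≤ L ε ^ (α/(1-α)) := Real.one_le_rpow hL1 (by positivity)
        nlinarith [Real.exp_pos (-β ε)]
      · exact hβlim
    have hGtends : Tendsto (fun ε => K * c1 * (L ε ^ (α/(1-α)) * Real.exp (-β ε))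
        + K * Real.exp (-β ε)) F (𝓝 0) := by
      have := (hβlim.const_mul (K * c1)).add (hexp0.const_mul K)
      simpa using this
    apply squeeze_zero'
      (g := fun ε => K * c1 * (L ε ^ (α/(1-α)) * Real.exp (-β ε)) + K * Real.exp (-β ε))
    · filter_upwards [hmemF] with ε hε
      exact Finset.sum_nonneg (fun k _ => qq_nonneg (α := α) hε.1.le hγs k)
    · filter_upwards [hmemF] with ε hε
      have hb := hβ ε hε
      have := g1_bound (α := α) hγs hα hα1 hε hb.1 hb.2
      calc g1 ε ≤ 1/(3*γs) * Real.exp (γs/(1-α)) * Real.exp (-β ε) *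
            (((1-α)/γs) ^ (α/(1-α)) * |Real.log ε| ^ (α/(1-α)) + 1) := this
        _ = K * c1 * (L ε ^ (α/(1-α)) * Real.exp (-β ε)) + K * Real.exp (-β ε) := by
            rw [hK, hc1]; ring
    · exact hGtends
  -- g2 → 0
  have hg2tends : Tendsto g2 F (𝓝 0) := by
    -- constants
    set A0 : ℝ := (1-α)/γs with hA0
    have hA0pos : 0 < A0 := by positivity
    set w : ℝ := ((A0 ^ (1/(1-α)) + C)/2) ^ (1-α) with hw
    have hbase : 0 < (A0 ^ (1/(1-α)) + C)/2 := by
      have := Real.rpow_pos_of_pos hA0pos (1/(1-α))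
      linarith
    have hwpos : 0 < w := Real.rpow_pos_of_pos hbase _
    have hwp : w ^ (1/(1-α)) = (A0 ^ (1/(1-α)) + C)/2 := by
      rw [hw, ← Real.rpow_mul hbase.le]
      rw [mul_one_div, div_self (ne_of_gt h1α), Real.rpow_one]
    have hwpC : w ^ (1/(1-α)) < C := by rw [hwp]; linarith [hC]
    have hA0w : A0 < w := by
      by_contra hcon
      push_neg at hcon
      have h2 : w ^ (1/(1-α)) ≤ A0 ^ (1/(1-α)) :=
        Real.rpow_le_rpow hwpos.le hcon hp.le
      rw [hwp] at h2
      linarith [hC]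
    set δ : ℝ := (w - A0)/(2*A0) with hδdef
    have hδpos : 0 < δ := div_pos (by linarith) (by linarith)
    set ν : ℝ := (w - A0)/2 with hνdef
    have hνpos : 0 < ν := by rw [hνdef]; linarith
    set A2 : ℝ := (1+δ)*(1-α)/γs with hA2
    have hA2A0 : A2 = (1+δ)*A0 := by rw [hA2, hA0]; ring
    have hA2pos : 0 < A2 := by rw [hA2A0]; positivity
    have hsumw : A2 + ν = w := by
      rw [hA2A0, hδdef, hνdef]
      field_simp
      ring
    -- the threshold J
    set J : ℕ := max 1 ⌈(γs/δ)^(1/α)⌉₊ with hJ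
    have hJ1 : 1 ≤ J := le_max_left _ _
    have hJpos : (0:ℝ) < J := by exact_mod_cast lt_of_lt_of_le Nat.zero_lt_one hJ1
    have hJδ : γs * (J:ℝ)^(-α) ≤ δ := by
      have hJx : (γs/δ)^(1/α) ≤ (J:ℝ) := by
        refine le_trans (Nat.le_ceil _) ?_
        exact_mod_cast le_max_right 1 ⌈(γs/δ)^(1/α)⌉₊
      have h1 : γs/δ ≤ (J:ℝ)^α := by
        have h2 : ((γs/δ)^(1/α))^α ≤ (J:ℝ)^α :=
          Real.rpow_le_rpow (Real.rpow_nonneg (by positivity) _) hJx hα.le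
        rwa [← Real.rpow_mul (by positivity), one_div, inv_mul_cancel₀ (ne_of_gt hα),
          Real.rpow_one] at h2
      have hJα : (0:ℝ) < (J:ℝ)^α := Real.rpow_pos_of_pos hJpos _
      rw [div_le_iff₀ hδpos] at h1
      rw [Real.rpow_neg hJpos.le]
      calc γs * ((J:ℝ)^α)⁻¹ ≤ ((J:ℝ)^α * δ) * ((J:ℝ)^α)⁻¹ :=
            mul_le_mul_of_nonneg_right h1 (inv_nonneg.mpr hJα.le)
        _ = δ := by field_simp
    set J' : ℝ := (J:ℝ)^(1-α) with hJ'
    have hJ'0 : 0 ≤ J' := Real.rpow_nonneg hJpos.le _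
    set k0 : ℝ → ℕ := fun ε => max J ⌈(A2 * L ε + J') ^ (1/(1-α))⌉₊ with hk0
    -- key fact 1
    have hkey1 : ∀ ε ∈ Set.Ioo (0:ℝ) 1, ∀ k, k0 ε ≤ k → 1 ≤ ε * Pi0 γs α k := by
      intro ε hε k hk
      have hJk : J ≤ k := le_trans (le_max_left _ _) hk
      apply one_le_eps_Pi0 hγs hα hα1 hε hδpos hJ1 hJδ hJk
      have hx0 : 0 ≤ A2 * L ε + J' := by
        have : 0 ≤ L ε := abs_nonneg _
        have := mul_nonneg hA2pos.le this
        linarith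
      have hceilk : (⌈(A2 * L ε + J') ^ (1/(1-α))⌉₊ : ℕ) ≤ k := le_trans (le_max_right _ _) hk
      have h1 : (A2 * L ε + J') ^ (1/(1-α)) ≤ (k:ℝ) :=
        le_trans (Nat.le_ceil _) (by exact_mod_cast hceilk)
      have h2 : ((A2 * L ε + J') ^ (1/(1-α))) ^ (1-α) ≤ (k:ℝ)^(1-α) :=
        Real.rpow_le_rpow (Real.rpow_nonneg hx0 _) h1 h1α.le
      rwa [← Real.rpow_mul hx0, one_div, inv_mul_cancel₀ (ne_of_gt h1α),
        Real.rpow_one] at h2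
    -- conclude
    rw [show (0:ℝ) = 0 from rfl]
    apply (tendsto_order (f := g2) (a := (0:ℝ))).mpr
    constructor
    · intro x hx
      filter_upwards [hmemF] with ε hε
      have : 0 ≤ g2 ε := Finset.prod_nonneg (fun k _ => by
        have h1 := qq_le_third (ε := ε) (γs := γs) (α := α) k
        linarith)
      linarith
    · intro x hx
      obtain ⟨T, hT⟩ := exists_pow_lt_of_lt_one hx (by norm_num : (2/3:ℝ) < 1)
      have hLptends : Tendsto (fun ε => L ε ^ (1/(1-α))) F atTop :=
        (tendsto_rpow_atTop hp).comp hLtends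
      filter_upwards [hmemF, hLtends.eventually_ge_atTop (max 1 (J'/ν)),
        hLptends.eventually_ge_atTop (((J:ℝ) + T + 2)/(C - w ^ (1/(1-α))))]
        with ε hε hL1 hLp
      have hLge1 : (1:ℝ) ≤ L ε := le_trans (le_max_left _ _) hL1
      have hLν : J' ≤ ν * L ε := by
        have h1 : J'/ν ≤ L ε := le_trans (le_max_right _ _) hL1
        rw [div_le_iff₀ hνpos] at h1
        linarith [h1]
      have hLpos : 0 < L ε := lt_of_lt_of_le zero_lt_one hLge1
      -- ceiling bounds
      have hx0 : 0 ≤ A2 * L ε + J' := by positivity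
      have h1 : A2 * L ε + J' ≤ w * L ε := by
        have h2 : A2 * L ε + ν * L ε = w * L ε := by
          rw [← hsumw]; ring
        linarith
      have h2 : (A2 * L ε + J') ^ (1/(1-α)) ≤ w ^ (1/(1-α)) * L ε ^ (1/(1-α)) := by
        rw [← Real.mul_rpow hwpos.le hLpos.le]
        exact Real.rpow_le_rpow hx0 h1 hp.le
      have hk0le : (k0 ε : ℝ) ≤ (J:ℝ) + (w ^ (1/(1-α)) * L ε ^ (1/(1-α)) + 1) := by
        have hmax : k0 ε ≤ J + ⌈(A2 * L ε + J') ^ (1/(1-α))⌉₊ := by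
          rw [hk0]
          exact max_le (Nat.le_add_right _ _) (Nat.le_add_left _ _)
        have hcast : (k0 ε : ℝ) ≤ (J:ℝ) + (⌈(A2 * L ε + J') ^ (1/(1-α))⌉₊ : ℝ) := by
          exact_mod_cast hmax
        have hceil : (⌈(A2 * L ε + J') ^ (1/(1-α))⌉₊ : ℝ) <
            (A2 * L ε + J') ^ (1/(1-α)) + 1 :=
          Nat.ceil_lt_add_one (Real.rpow_nonneg hx0 _)
        linarith
      have hbbpos : 0 < bb ε := by
        have : 0 < L ε ^ (1/(1-α)) := Real.rpow_pos_of_pos hLpos _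
        exact mul_pos hC0 this
      have hceil1 : 1 ≤ ⌈bb ε⌉₊ := Nat.one_le_ceil_iff.mpr hbbpos
      have hMMge : bb ε - 1 ≤ (MM ε : ℝ) := by
        have h3 : bb ε ≤ (⌈bb ε⌉₊ : ℝ) := Nat.le_ceil _
        have h4 : (MM ε : ℝ) = (⌈bb ε⌉₊ : ℝ) - 1 := by
          rw [hMMdef]; push_cast [hceil1]; ring
        linarith
      have hgap : ((J:ℝ) + T + 2) ≤ (C - w ^ (1/(1-α))) * L ε ^ (1/(1-α)) := by
        rw [div_le_iff₀ (by linarith [hwpC] : (0:ℝ) < C - w ^ (1/(1-α)))] at hLp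
        linarith
      have hfinℝ : (k0 ε : ℝ) + T ≤ (MM ε : ℝ) := by
        have hbbexp : bb ε = C * L ε ^ (1/(1-α)) := rfl
        have hexpand : (C - w ^ (1/(1-α))) * L ε ^ (1/(1-α)) =
            C * L ε ^ (1/(1-α)) - w ^ (1/(1-α)) * L ε ^ (1/(1-α)) := by ring
        linarith [hk0le, hMMge, hgap, hexpand]
      have hfinℕ : k0 ε + T ≤ MM ε := by exact_mod_cast hfinℝ
      have hk0MM : k0 ε ≤ MM ε := by omega
      have hTle : T ≤ MM ε - k0 ε := by omega
      have hbound := prod_one_sub_qq_le (α := α) hε hγs hk0MM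
        (fun k hk => hkey1 ε hε k hk)
      calc g2 ε ≤ (2/3:ℝ)^(MM ε - k0 ε) := hbound
        _ ≤ (2/3:ℝ)^T := pow_le_pow_of_le_one (by norm_num) (by norm_num) hTle
        _ < x := hT
  -- final squeeze
  have hlower : Tendsto (fun ε => 1 - g1 ε - g2 ε) F (𝓝 1) := by
    have := (tendsto_const_nhds (x := (1:ℝ)) (f := F)).sub hg1tends |>.sub hg2tends
    simpa using this
  apply tendsto_of_tendsto_of_tendsto_of_le_of_le' hlower tendsto_const_nhds
  · filter_upwards [hmemF] with ε hε
    exact (hsand ε hε).1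
  · filter_upwards [hmemF] with ε hε
    exact (hsand ε hε).2
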